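/- Let d be a positive integer and l an odd prime with l ∤ d and l ∤ 2. If x² + d·y² = l is solvable in ℤ_p for all primes p, then l splits completely in ℚ(√−d), i.e., −d is a quadratic residue mod l; moreover for each odd prime q dividing d, l is a quadratic residue mod q; and if d is odd then l ≡ 1 or d (mod 4); if d ≡ 2 (mod 4) then l ≡ 1 or d+1 (mod 8); if d ≡ 4 (mod 8) then l ≡ 1 (mod 4); if 8 | d then l ≡ 1 (mod 8). -/

import Mathlib

private lemma deciL1 : ∀ a b c e : ZMod 4, c.val % 2 = 1 → e.val % 2 = 1 →
    a^2 + c*b^2 = e → (e = 1 ∨ e = c) := by decide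

private lemma deciL2 : ∀ a b c e : ZMod 8, c.val % 4 = 2 → e.val % 2 = 1 →
    a^2 + c*b^2 = e → (e = 1 ∨ e = c + 1) := by decide

private lemma deciL3 : ∀ a e : ZMod 4, e.val % 2 = 1 → a^2 = e → e = 1 := by decide

private lemma deciL4 : ∀ a e : ZMod 8, e.val % 2 = 1 → a^2 = e → e = 1 := by decide

theorem local_solvability_conditions_x_sq_add_d_y_sq
    (d l : ℕ) (hd : 0 < d) (hl : l.Prime) (hlodd : l ≠ 2) (hld : ¬ l ∣ d)
    (hloc : ∀ (p : ℕ) (_ : Fact p.Prime), ∃ x y : ℤ_[p], x ^ 2 + d * y ^ 2 = l) :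
    IsSquare (-(d : ZMod l)) ∧
    (∀ q : ℕ, q.Prime → q ≠ 2 → q ∣ d → IsSquare ((l : ZMod q))) ∧
    (Odd d → l % 4 = 1 ∨ l % 4 = d % 4) ∧
    (d % 4 = 2 → l % 8 = 1 ∨ l % 8 = (d + 1) % 8) ∧
    (d % 8 = 4 → l % 4 = 1) ∧
    (8 ∣ d → l % 8 = 1) := by
  have hl2 : l % 2 = 1 := Nat.odd_iff.mp (hl.odd_of_ne_two hlodd)
  -- Part 1 : p = l
  have part1 : IsSquare (-(d : ZMod l)) := by
    haveI : Fact l.Prime := ⟨hl⟩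
    obtain ⟨x, y, hxy⟩ := hloc l ⟨hl⟩
    have h0 : (PadicInt.toZMod x)^2 + (d : ZMod l) * (PadicInt.toZMod y)^2 = 0 := by
      have := congrArg (PadicInt.toZMod (p := l)) hxy
      simpa [map_add, map_mul, map_pow, map_natCast] using this
    have hy : PadicInt.toZMod y ≠ 0 := by
      intro hy0
      have hx0 : PadicInt.toZMod x = 0 := by
        have : (PadicInt.toZMod x)^2 = 0 := by simpa [hy0] using h0
        exact pow_eq_zero_iff (by norm_num) |>.mp this
      -- then l ∣ x and l ∣ y in ℤ_[l]
      have hdx : (l : ℤ_[l]) ∣ x := by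
        have : x ∈ RingHom.ker (PadicInt.toZMod (p := l)) := hx0
        rw [PadicInt.ker_toZMod, PadicInt.maximalIdeal_eq_span_p,
          Ideal.mem_span_singleton] at this
        exact this
      have hdy : (l : ℤ_[l]) ∣ y := by
        have : y ∈ RingHom.ker (PadicInt.toZMod (p := l)) := hy0
        rw [PadicInt.ker_toZMod, PadicInt.maximalIdeal_eq_span_p,
          Ideal.mem_span_singleton] at this
        exact this
      obtain ⟨a, rfl⟩ := hdx
      obtain ⟨b, rfl⟩ := hdy
      have hlne : (l : ℤ_[l]) ≠ 0 := Nat.cast_ne_zero.mpr hl.ne_zero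
      have key : (l : ℤ_[l]) * ((l : ℤ_[l]) * (a^2 + d * b^2)) = (l : ℤ_[l]) * 1 := by
        rw [mul_one]; conv_rhs => rw [← hxy]
        ring
      have hone : (l : ℤ_[l]) * (a^2 + d * b^2) = 1 := mul_left_cancel₀ hlne key
      have := congrArg (PadicInt.toZMod (p := l)) hone
      simp only [map_mul, map_natCast, map_one, ZMod.natCast_self, zero_mul] at this
      exact zero_ne_one this
    refine ⟨PadicInt.toZMod x * (PadicInt.toZMod y)⁻¹, ?_⟩
    field_simp
    linear_combination -h0
  refine ⟨part1, ?_, ?_⟩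
  · intro q hq hq2 hqd
    haveI : Fact q.Prime := ⟨hq⟩
    obtain ⟨x, y, hxy⟩ := hloc q ⟨hq⟩
    have hd0 : (d : ZMod q) = 0 := (ZMod.natCast_eq_zero_iff d q).mpr hqd
    have h0 : (PadicInt.toZMod x)^2 = (l : ZMod q) := by
      have := congrArg (PadicInt.toZMod (p := q)) hxy
      simpa [map_add, map_mul, map_pow, map_natCast, hd0] using this
    exact ⟨PadicInt.toZMod x, by rw [← h0]; ring⟩
  -- p = 2 parts
  obtain ⟨x, y, hxy⟩ := hloc 2 ⟨Nat.prime_two⟩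
  set f8 : ℤ_[2] →+* ZMod 8 :=
    (ZMod.castHom (show (8:ℕ) ∣ 2^3 by norm_num) (ZMod 8)).comp (PadicInt.toZModPow 3) with hf8
  set f4 : ℤ_[2] →+* ZMod 4 :=
    (ZMod.castHom (show (4:ℕ) ∣ 2^2 by norm_num) (ZMod 4)).comp (PadicInt.toZModPow 2) with hf4
  have h8 : (f8 x)^2 + (d : ZMod 8) * (f8 y)^2 = (l : ZMod 8) := by
    have := congrArg f8 hxy
    simpa [map_add, map_mul, map_pow, map_natCast] using this
  have h4 : (f4 x)^2 + (d : ZMod 4) * (f4 y)^2 = (l : ZMod 4) := by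
    have := congrArg f4 hxy
    simpa [map_add, map_mul, map_pow, map_natCast] using this
  have hlv4 : ((l : ZMod 4)).val = l % 4 := ZMod.val_natCast _ l
  have hlv8 : ((l : ZMod 8)).val = l % 8 := ZMod.val_natCast _ l
  have hdv4 : ((d : ZMod 4)).val = d % 4 := ZMod.val_natCast _ d
  have hdv8 : ((d : ZMod 8)).val = d % 8 := ZMod.val_natCast _ d
  have hle4 : ((l : ZMod 4)).val % 2 = 1 := by
    rw [hlv4, Nat.mod_mod_of_dvd l (by norm_num)]; exact hl2
  have hle8 : ((l : ZMod 8)).val % 2 = 1 := by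
    rw [hlv8, Nat.mod_mod_of_dvd l (by norm_num)]; exact hl2
  refine ⟨?_, ?_, ?_, ?_⟩
  · intro hdo
    have hdo2 : ((d : ZMod 4)).val % 2 = 1 := by
      rw [hdv4, Nat.mod_mod_of_dvd d (by norm_num)]; exact Nat.odd_iff.mp hdo
    rcases deciL1 (f4 x) (f4 y) _ _ hdo2 hle4 h4 with h | h
    · left; rw [← hlv4, h]; rfl
    · right; rw [← hlv4, ← hdv4, h]
  · intro hd4
    have hc : ((d : ZMod 8)).val % 4 = 2 := by
      rw [hdv8, Nat.mod_mod_of_dvd d (by norm_num)]; exact hd4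
    rcases deciL2 (f8 x) (f8 y) _ _ hc hle8 h8 with h | h
    · left; rw [← hlv8, h]; rfl
    · right
      have : ((d : ZMod 8) + 1) = ((d + 1 : ℕ) : ZMod 8) := by push_cast; ring
      rw [← hlv8, h, this, ZMod.val_natCast]
  · intro hd84
    have hd0 : (d : ZMod 4) = 0 :=
      (ZMod.natCast_eq_zero_iff d 4).mpr (by omega)
    have : (f4 x)^2 = (l : ZMod 4) := by rw [← h4, hd0]; ring
    have he := deciL3 (f4 x) _ hle4 this
    rw [← hlv4, he]; rfl
  · intro hd8
    have hd0 : (d : ZMod 8) = 0 :=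
      (ZMod.natCast_eq_zero_iff d 8).mpr hd8
    have : (f8 x)^2 = (l : ZMod 8) := by rw [← h8, hd0]; ring
    have he := deciL4 (f8 x) _ hle8 this
    rw [← hlv8, he]; rfl
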